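/- For |x| < 1 and |a| < 1 (octonions), the identity B(x,a) = D̄_x ( (x - a|x|²) / |1 - x̄a|⁸ ) holds, where B(x,a) = [6(1 - |a|²|x|²) + 2(1 - x̄a)](1 - x̄a) / |1 - x̄a|^{10}. -/

import Mathlib

noncomputable section
open MeasureTheory Metric
open scoped Quaternion

/-- The octonions, via the Cayley–Dickson construction on the quaternions,
carrying the Euclidean (`L²`) norm. -/
abbrev Octonion : Type := WithLp 2 (ℍ[ℝ] × ℍ[ℝ])

namespace Octonion

def mk (a b : ℍ[ℝ]) : Octonion := (WithLp.equiv 2 (ℍ[ℝ] × ℍ[ℝ])).symm (a, b)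
def p1 (x : Octonion) : ℍ[ℝ] := (WithLp.equiv 2 (ℍ[ℝ] × ℍ[ℝ]) x).1
def p2 (x : Octonion) : ℍ[ℝ] := (WithLp.equiv 2 (ℍ[ℝ] × ℍ[ℝ]) x).2

instance : One Octonion := ⟨mk 1 0⟩
/-- Cayley–Dickson multiplication: `(a,b)(c,d) = (ac - d̄b, da + bc̄)`. -/
instance : Mul Octonion :=
  ⟨fun x y => mk (p1 x * p1 y - star (p2 y) * p2 x) (p2 y * p1 x + p2 x * star (p1 y))⟩

/-- Octonionic conjugation. -/
def conj (x : Octonion) : Octonion := mk (star (p1 x)) (-(p2 x))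

/-- The standard basis `e₀ = 1, e₁, …, e₇` of the octonions. -/
def e : Fin 8 → Octonion
  | 0 => mk 1 0
  | 1 => mk ⟨0,1,0,0⟩ 0
  | 2 => mk ⟨0,0,1,0⟩ 0
  | 3 => mk ⟨0,0,0,1⟩ 0
  | 4 => mk 0 1
  | 5 => mk 0 ⟨0,1,0,0⟩
  | 6 => mk 0 ⟨0,0,1,0⟩
  | 7 => mk 0 ⟨0,0,0,1⟩

/-- The real coordinates of an octonion w.r.t. the basis `e`. -/
def coord (i : Fin 8) (x : Octonion) : ℝ :=
  match i with
  | 0 => (p1 x).re | 1 => (p1 x).imI | 2 => (p1 x).imJ | 3 => (p1 x).imK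
  | 4 => (p2 x).re | 5 => (p2 x).imI | 6 => (p2 x).imJ | 7 => (p2 x).imK

/-- Partial derivative in the direction `e i`. -/
def pd (i : Fin 8) (f : Octonion → Octonion) (x : Octonion) : Octonion :=
  fderiv ℝ f x (e i)

/-- The generalized Cauchy–Riemann operator `Df = ∑ eᵢ ∂f/∂xᵢ`. -/
def D (f : Octonion → Octonion) (x : Octonion) : Octonion := ∑ i, e i * pd i f x

/-- The right-acting Cauchy–Riemann operator `fD = ∑ (∂f/∂xᵢ) eᵢ`. -/
def Dright (f : Octonion → Octonion) (x : Octonion) : Octonion := ∑ i, pd i f x * e i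

/-- The conjugate Cauchy–Riemann operator `D̄f = ∑ ēᵢ ∂f/∂xᵢ`. -/
def Dbar (f : Octonion → Octonion) (x : Octonion) : Octonion := ∑ i, conj (e i) * pd i f x

/-- The Laplacian `Δf = ∑ ∂²f/∂xᵢ²`. -/
def lap (f : Octonion → Octonion) (x : Octonion) : Octonion :=
  ∑ i, fderiv ℝ (fun y => fderiv ℝ f y (e i)) x (e i)

instance : MeasurableSpace Octonion := borel _
instance : BorelSpace Octonion := ⟨rfl⟩
instance : MeasureSpace Octonion := ⟨Measure.addHaar⟩

/-- The surface measure on the unit sphere `S⁷`. -/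
def sphereMeasure : Measure (sphere (0 : Octonion) 1) := (volume : Measure Octonion).toSphere

/-- `ω₈`, the surface area of the unit sphere in `ℝ⁸`. -/
def ω : ℝ := (sphereMeasure Set.univ).toReal

end Octonion

/-- The octonionic Bergman kernel of the unit ball. -/
def bergmanKernel (x a : Octonion) : Octonion :=
  (‖(1 : Octonion) - Octonion.conj x * a‖ ^ 10)⁻¹ •
    (((6 * (1 - ‖a‖ ^ 2 * ‖x‖ ^ 2)) • (1 : Octonion) +
        (2 : ℝ) • ((1 : Octonion) - Octonion.conj x * a)) *
      ((1 : Octonion) - Octonion.conj x * a))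

namespace Octonion

@[simp] lemma p1_mk (a b : ℍ[ℝ]) : p1 (mk a b) = a := rfl
@[simp] lemma p2_mk (a b : ℍ[ℝ]) : p2 (mk a b) = b := rfl
@[simp] lemma p1_add (x y : Octonion) : p1 (x + y) = p1 x + p1 y := rfl
@[simp] lemma p2_add (x y : Octonion) : p2 (x + y) = p2 x + p2 y := rfl
@[simp] lemma p1_sub (x y : Octonion) : p1 (x - y) = p1 x - p1 y := rfl
@[simp] lemma p2_sub (x y : Octonion) : p2 (x - y) = p2 x - p2 y := rfl
@[simp] lemma p1_neg (x : Octonion) : p1 (-x) = -p1 x := rfl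
@[simp] lemma p2_neg (x : Octonion) : p2 (-x) = -p2 x := rfl
@[simp] lemma p1_smul (r : ℝ) (x : Octonion) : p1 (r • x) = r • p1 x := rfl
@[simp] lemma p2_smul (r : ℝ) (x : Octonion) : p2 (r • x) = r • p2 x := rfl
@[simp] lemma p1_one : p1 (1 : Octonion) = 1 := rfl
@[simp] lemma p2_one : p2 (1 : Octonion) = 0 := rfl
@[simp] lemma p1_zero : p1 (0 : Octonion) = 0 := rfl
@[simp] lemma p2_zero : p2 (0 : Octonion) = 0 := rfl
@[simp] lemma p1_mul (x y : Octonion) : p1 (x * y) = p1 x * p1 y - star (p2 y) * p2 x := rfl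
@[simp] lemma p2_mul (x y : Octonion) : p2 (x * y) = p2 y * p1 x + p2 x * star (p1 y) := rfl
@[simp] lemma p1_conj (x : Octonion) : p1 (conj x) = star (p1 x) := rfl
@[simp] lemma p2_conj (x : Octonion) : p2 (conj x) = -(p2 x) := rfl

lemma oext {x y : Octonion} (h1 : p1 x = p1 y) (h2 : p2 x = p2 y) : x = y := by
  have : (WithLp.equiv 2 (ℍ[ℝ] × ℍ[ℝ])) x = (WithLp.equiv 2 (ℍ[ℝ] × ℍ[ℝ])) y :=
    Prod.ext h1 h2
  exact (WithLp.equiv 2 (ℍ[ℝ] × ℍ[ℝ])).injective this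

lemma norm_sq_eq (x : Octonion) :
    ‖x‖ ^ 2 = Quaternion.normSq (p1 x) + Quaternion.normSq (p2 x) := by
  rw [← real_inner_self_eq_norm_sq, WithLp.prod_inner_apply, Quaternion.inner_self,
    Quaternion.inner_self]
  rfl

lemma inner_eq (x y : Octonion) : (inner ℝ x y : ℝ) =
    ((p1 x) * star (p1 y)).re + ((p2 x) * star (p2 y)).re := by
  rw [WithLp.prod_inner_apply, Quaternion.inner_def, Quaternion.inner_def]
  rfl

end Octonion
namespace Octonion

lemma quat_ext {a b : ℍ[ℝ]} (h1 : a.re = b.re) (h2 : a.imI = b.imI) (h3 : a.imJ = b.imJ)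
    (h4 : a.imK = b.imK) : a = b := QuaternionAlgebra.ext h1 h2 h3 h4

lemma mul_add' (x y z : Octonion) : x * (y + z) = x * y + x * z := by
  refine oext ?_ ?_ <;> simp [mul_add, add_mul, star_add] <;> abel

lemma add_mul' (x y z : Octonion) : (x + y) * z = x * z + y * z := by
  refine oext ?_ ?_ <;> simp [mul_add, add_mul, star_add] <;> abel

lemma mul_smul' (r : ℝ) (x y : Octonion) : x * (r • y) = r • (x * y) := by
  refine oext ?_ ?_ <;>
    simp only [p1_mul, p2_mul, p1_smul, p2_smul, Quaternion.star_smul, smul_sub, smul_add,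
      mul_smul_comm (β := ℍ[ℝ]), smul_mul_assoc (β := ℍ[ℝ])]

lemma smul_mul' (r : ℝ) (x y : Octonion) : (r • x) * y = r • (x * y) := by
  refine oext ?_ ?_ <;>
    simp only [p1_mul, p2_mul, p1_smul, p2_smul, Quaternion.star_smul, smul_sub, smul_add,
      mul_smul_comm (β := ℍ[ℝ]), smul_mul_assoc (β := ℍ[ℝ])]

lemma mul_one' (x : Octonion) : x * 1 = x := by
  refine oext ?_ ?_ <;> simp

lemma one_mul' (x : Octonion) : 1 * x = x := by
  refine oext ?_ ?_ <;> simp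

lemma mul_sub' (x y z : Octonion) : x * (y - z) = x * y - x * z := by
  refine oext ?_ ?_ <;> simp [mul_sub, sub_mul, star_sub] <;> abel

lemma sub_mul' (x y z : Octonion) : (x - y) * z = x * z - y * z := by
  refine oext ?_ ?_ <;> simp [mul_sub, sub_mul, star_sub] <;> abel

end Octonion
namespace Octonion

section
open Quaternion

attribute [local simp] Quaternion.re_mul Quaternion.imI_mul Quaternion.imJ_mul
  Quaternion.imK_mul Quaternion.normSq_def'

lemma conj_mul' (x y : Octonion) : conj (x * y) = conj y * conj x := by
  refine oext ?_ ?_ <;> apply quat_ext <;> simp <;> ring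

lemma conj_mul_self (x : Octonion) : conj x * x = (‖x‖ ^ 2) • (1 : Octonion) := by
  rw [norm_sq_eq]
  refine oext ?_ ?_ <;> apply quat_ext <;> simp <;> ring

lemma mul_conj_self (x : Octonion) : x * conj x = (‖x‖ ^ 2) • (1 : Octonion) := by
  rw [norm_sq_eq]
  refine oext ?_ ?_ <;> apply quat_ext <;> simp <;> ring

lemma conj_conj' (x : Octonion) : conj (conj x) = x := by
  refine oext ?_ ?_ <;> simp

lemma mul_conj_cancel (x y : Octonion) : (x * y) * conj y = (‖y‖ ^ 2) • x := by
  rw [norm_sq_eq]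
  refine oext ?_ ?_ <;> apply quat_ext <;> simp <;> ring

lemma norm_mul' (x y : Octonion) : ‖x * y‖ ^ 2 = ‖x‖ ^ 2 * ‖y‖ ^ 2 := by
  rw [norm_sq_eq, norm_sq_eq, norm_sq_eq]
  simp
  ring

lemma add_conj_self (x : Octonion) : x + conj x = (2 * (inner ℝ (1 : Octonion) x : ℝ)) • 1 := by
  rw [inner_eq]
  refine oext ?_ ?_ <;> apply quat_ext <;> simp <;> ring

end

end Octonion
namespace Octonion
section

@[simp] lemma e_0 : e 0 = mk 1 0 := rfl
@[simp] lemma e_1 : e 1 = mk ⟨0,1,0,0⟩ 0 := rfl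
@[simp] lemma e_2 : e 2 = mk ⟨0,0,1,0⟩ 0 := rfl
@[simp] lemma e_3 : e 3 = mk ⟨0,0,0,1⟩ 0 := rfl
@[simp] lemma e_4 : e 4 = mk 0 1 := rfl
@[simp] lemma e_5 : e 5 = mk 0 ⟨0,1,0,0⟩ := rfl
@[simp] lemma e_6 : e 6 = mk 0 ⟨0,0,1,0⟩ := rfl
@[simp] lemma e_7 : e 7 = mk 0 ⟨0,0,0,1⟩ := rfl
lemma p1_mk_re (a : ℍ[ℝ,-1,-1]) (b : ℍ[ℝ]) : (p1 (mk a b)).re = a.re := rfl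
lemma p1_mk_imI (a : ℍ[ℝ,-1,-1]) (b : ℍ[ℝ]) : (p1 (mk a b)).imI = a.imI := rfl
lemma p1_mk_imJ (a : ℍ[ℝ,-1,-1]) (b : ℍ[ℝ]) : (p1 (mk a b)).imJ = a.imJ := rfl
lemma p1_mk_imK (a : ℍ[ℝ,-1,-1]) (b : ℍ[ℝ]) : (p1 (mk a b)).imK = a.imK := rfl
lemma p2_mk_re (a : ℍ[ℝ,-1,-1]) (b : ℍ[ℝ]) : (p2 (mk b a)).re = a.re := rfl
lemma p2_mk_imI (a : ℍ[ℝ,-1,-1]) (b : ℍ[ℝ]) : (p2 (mk b a)).imI = a.imI := rfl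
lemma p2_mk_imJ (a : ℍ[ℝ,-1,-1]) (b : ℍ[ℝ]) : (p2 (mk b a)).imJ = a.imJ := rfl
lemma p2_mk_imK (a : ℍ[ℝ,-1,-1]) (b : ℍ[ℝ]) : (p2 (mk b a)).imK = a.imK := rfl
lemma p1_mk_re' (a : ℍ[ℝ,-1,-1]) (b : ℍ[ℝ]) : (p1 (mk b a)).re = b.re := rfl
lemma p1_mk_imI' (a : ℍ[ℝ,-1,-1]) (b : ℍ[ℝ]) : (p1 (mk b a)).imI = b.imI := rfl
lemma p1_mk_imJ' (a : ℍ[ℝ,-1,-1]) (b : ℍ[ℝ]) : (p1 (mk b a)).imJ = b.imJ := rfl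
lemma p1_mk_imK' (a : ℍ[ℝ,-1,-1]) (b : ℍ[ℝ]) : (p1 (mk b a)).imK = b.imK := rfl
lemma p2_mk_re' (a : ℍ[ℝ,-1,-1]) (b : ℍ[ℝ]) : (p2 (mk a b)).re = b.re := rfl
lemma p2_mk_imI' (a : ℍ[ℝ,-1,-1]) (b : ℍ[ℝ]) : (p2 (mk a b)).imI = b.imI := rfl
lemma p2_mk_imJ' (a : ℍ[ℝ,-1,-1]) (b : ℍ[ℝ]) : (p2 (mk a b)).imJ = b.imJ := rfl
lemma p2_mk_imK' (a : ℍ[ℝ,-1,-1]) (b : ℍ[ℝ]) : (p2 (mk a b)).imK = b.imK := rfl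

set_option maxHeartbeats 2000000 in
lemma sum_A : ∑ i, conj (e i) * e i = (8 : ℝ) • (1 : Octonion) := by
  rw [Fin.sum_univ_eight]
  refine oext ?_ ?_ <;> apply quat_ext <;>
    simp only [e_0, e_1, e_2, e_3, e_4, e_5, e_6, e_7, p1_mk, p2_mk, p1_mul, p2_mul,
      p1_conj, p2_conj, p1_add, p2_add, p1_one, p2_one, p1_smul, p2_smul,
      Quaternion.re_mul, Quaternion.imI_mul, Quaternion.imJ_mul, Quaternion.imK_mul,
      Quaternion.re_add, Quaternion.imI_add, Quaternion.imJ_add, Quaternion.imK_add,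
      Quaternion.re_sub, Quaternion.imI_sub, Quaternion.imJ_sub, Quaternion.imK_sub,
      Quaternion.re_neg, Quaternion.imI_neg, Quaternion.imJ_neg, Quaternion.imK_neg,
      Quaternion.re_star, Quaternion.imI_star, Quaternion.imJ_star, Quaternion.imK_star,
      Quaternion.re_one, Quaternion.imI_one, Quaternion.imJ_one, Quaternion.imK_one,
      Quaternion.re_zero, Quaternion.imI_zero, Quaternion.imJ_zero, Quaternion.imK_zero,
      Quaternion.re_smul, Quaternion.imI_smul, Quaternion.imJ_smul, Quaternion.imK_smul,
      smul_eq_mul, p1_mk_re, p1_mk_imI, p1_mk_imJ, p1_mk_imK,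
      p2_mk_re, p2_mk_imI, p2_mk_imJ, p2_mk_imK, p1_mk_re', p1_mk_imI', p1_mk_imJ',
      p1_mk_imK', p2_mk_re', p2_mk_imI', p2_mk_imJ', p2_mk_imK'] <;> norm_num

set_option maxHeartbeats 2000000 in
lemma sum_B (x : Octonion) : ∑ i, (inner ℝ x (e i) : ℝ) • conj (e i) = conj x := by
  rw [Fin.sum_univ_eight]
  simp only [inner_eq]
  refine oext ?_ ?_ <;> apply quat_ext <;>
    simp only [e_0, e_1, e_2, e_3, e_4, e_5, e_6, e_7, p1_mk, p2_mk, p1_mul, p2_mul,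
      p1_conj, p2_conj, p1_add, p2_add, p1_one, p2_one, p1_smul, p2_smul,
      Quaternion.re_mul, Quaternion.imI_mul, Quaternion.imJ_mul, Quaternion.imK_mul,
      Quaternion.re_add, Quaternion.imI_add, Quaternion.imJ_add, Quaternion.imK_add,
      Quaternion.re_sub, Quaternion.imI_sub, Quaternion.imJ_sub, Quaternion.imK_sub,
      Quaternion.re_neg, Quaternion.imI_neg, Quaternion.imJ_neg, Quaternion.imK_neg,
      Quaternion.re_star, Quaternion.imI_star, Quaternion.imJ_star, Quaternion.imK_star,
      Quaternion.re_one, Quaternion.imI_one, Quaternion.imJ_one, Quaternion.imK_one,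
      Quaternion.re_zero, Quaternion.imI_zero, Quaternion.imJ_zero, Quaternion.imK_zero,
      Quaternion.re_smul, Quaternion.imI_smul, Quaternion.imJ_smul, Quaternion.imK_smul,
      smul_eq_mul, p1_mk_re, p1_mk_imI, p1_mk_imJ, p1_mk_imK,
      p2_mk_re, p2_mk_imI, p2_mk_imJ, p2_mk_imK, p1_mk_re', p1_mk_imI', p1_mk_imJ',
      p1_mk_imK', p2_mk_re', p2_mk_imI', p2_mk_imJ', p2_mk_imK'] <;> ring

set_option maxHeartbeats 4000000 in
lemma sum_C (w a : Octonion) :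
    ∑ i, (inner ℝ w (conj (e i) * a) : ℝ) • conj (e i) = w * conj a := by
  rw [Fin.sum_univ_eight]
  simp only [inner_eq]
  refine oext ?_ ?_ <;> apply quat_ext <;>
    simp only [e_0, e_1, e_2, e_3, e_4, e_5, e_6, e_7, p1_mk, p2_mk, p1_mul, p2_mul,
      p1_conj, p2_conj, p1_add, p2_add, p1_one, p2_one, p1_smul, p2_smul,
      Quaternion.re_mul, Quaternion.imI_mul, Quaternion.imJ_mul, Quaternion.imK_mul,
      Quaternion.re_add, Quaternion.imI_add, Quaternion.imJ_add, Quaternion.imK_add,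
      Quaternion.re_sub, Quaternion.imI_sub, Quaternion.imJ_sub, Quaternion.imK_sub,
      Quaternion.re_neg, Quaternion.imI_neg, Quaternion.imJ_neg, Quaternion.imK_neg,
      Quaternion.re_star, Quaternion.imI_star, Quaternion.imJ_star, Quaternion.imK_star,
      Quaternion.re_one, Quaternion.imI_one, Quaternion.imJ_one, Quaternion.imK_one,
      Quaternion.re_zero, Quaternion.imI_zero, Quaternion.imJ_zero, Quaternion.imK_zero,
      Quaternion.re_smul, Quaternion.imI_smul, Quaternion.imJ_smul, Quaternion.imK_smul,
      smul_eq_mul, p1_mk_re, p1_mk_imI, p1_mk_imJ, p1_mk_imK,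
      p2_mk_re, p2_mk_imI, p2_mk_imJ, p2_mk_imK, p1_mk_re', p1_mk_imI', p1_mk_imJ',
      p1_mk_imK', p2_mk_re', p2_mk_imI', p2_mk_imJ', p2_mk_imK'] <;> ring

end
end Octonion
namespace Octonion

lemma conj_add' (x y : Octonion) : conj (x + y) = conj x + conj y := by
  refine oext ?_ ?_ <;> simp [star_add] <;> abel

lemma conj_smul' (r : ℝ) (x : Octonion) : conj (r • x) = r • conj x := by
  refine oext ?_ ?_ <;> simp [Quaternion.star_smul]

/-- Right multiplication by `y`, as a linear map. -/
def rmulL (y : Octonion) : Octonion →ₗ[ℝ] Octonion where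
  toFun z := z * y
  map_add' u v := add_mul' u v y
  map_smul' r u := smul_mul' r u y

@[simp] lemma rmulL_apply (y z : Octonion) : rmulL y z = z * y := rfl

/-- `y ↦ conj y * a` as a continuous linear map. -/
def Tmap (a : Octonion) : Octonion →L[ℝ] Octonion :=
  LinearMap.toContinuousLinearMap
  { toFun := fun y => conj y * a
    map_add' := fun u v => by show conj (u + v) * a = conj u * a + conj v * a; rw [conj_add', add_mul']
    map_smul' := fun r u => by simp only [RingHom.id_apply]; rw [conj_smul']; exact smul_mul' r (conj u) a }

@[simp] lemma Tmap_apply (a y : Octonion) : Tmap a y = conj y * a := rfl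

end Octonion
namespace Octonion
section
attribute [local simp] Quaternion.re_mul Quaternion.imI_mul Quaternion.imJ_mul
  Quaternion.imK_mul Quaternion.normSq_def'

set_option maxHeartbeats 4000000 in
lemma main_algebra (x a : Octonion) :
    (‖(1:Octonion) - conj x * a‖ ^ 2) • ((8:ℝ) • (1:Octonion) - (2:ℝ) • (conj x * a))
      + (8:ℝ) • (((((1:Octonion) - conj x * a) * conj a) * (x - (‖x‖^2) • a)))
    = ((6 * (1 - ‖a‖^2 * ‖x‖^2)) • (1:Octonion) + (2:ℝ) • ((1:Octonion) - conj x * a))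
        * ((1:Octonion) - conj x * a) := by
  rw [norm_sq_eq, norm_sq_eq, norm_sq_eq]
  refine oext ?_ ?_ <;> apply quat_ext <;> simp <;> ring

end
end Octonion
namespace Octonion

/-- `1 - conj x * a`. -/
def wc (a x : Octonion) : Octonion := (1:Octonion) - Tmap a x

def qv (a x : Octonion) : ℝ := (inner ℝ (wc a x) (wc a x) : ℝ)

def LqCLM (a x : Octonion) : Octonion →L[ℝ] ℝ :=
  (fderivInnerCLM ℝ (wc a x, wc a x)).comp ((0 - Tmap a).prod (0 - Tmap a))

def LiCLM (x : Octonion) : Octonion →L[ℝ] ℝ :=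
  (fderivInnerCLM ℝ (x, x)).comp
    ((ContinuousLinearMap.id ℝ Octonion).prod (ContinuousLinearMap.id ℝ Octonion))

def LL (a x : Octonion) : Octonion →L[ℝ] Octonion :=
  ((qv a x)^4)⁻¹ • (ContinuousLinearMap.id ℝ Octonion - (LiCLM x).smulRight a)
  + ((-((4:ℕ) * (qv a x)^(4-1)) / ((qv a x)^4)^2) • (LqCLM a x)).smulRight
      (x - (inner ℝ x x : ℝ) • a)

lemma hasFDerivAt_F (a x : Octonion) (h0 : qv a x ≠ 0) :
    HasFDerivAt (fun y =>
      ((inner ℝ ((1:Octonion) - Tmap a y) ((1:Octonion) - Tmap a y) : ℝ)^4)⁻¹ •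
        (y - (inner ℝ y y : ℝ) • a)) (LL a x) x := by
  have hw : HasFDerivAt (fun y => (1:Octonion) - Tmap a y) (0 - Tmap a) x :=
    (hasFDerivAt_const _ _).sub (Tmap a).hasFDerivAt
  have hq : HasFDerivAt
      (fun y => (inner ℝ ((1:Octonion) - Tmap a y) ((1:Octonion) - Tmap a y) : ℝ))
      (LqCLM a x) x := hw.inner ℝ hw
  have houter : HasDerivAt (fun s : ℝ => (s^4)⁻¹)
      (-((4:ℕ) * (qv a x)^(4-1)) / ((qv a x)^4)^2) (qv a x) :=
    (hasDerivAt_pow 4 (qv a x)).inv (pow_ne_zero _ h0)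
  have hg : HasFDerivAt
      (fun y => ((inner ℝ ((1:Octonion) - Tmap a y) ((1:Octonion) - Tmap a y) : ℝ)^4)⁻¹)
      ((-((4:ℕ) * (qv a x)^(4-1)) / ((qv a x)^4)^2) • LqCLM a x) x :=
    houter.comp_hasFDerivAt x hq
  have hi : HasFDerivAt (fun y : Octonion => (inner ℝ y y : ℝ)) (LiCLM x) x :=
    (hasFDerivAt_id x).inner ℝ (hasFDerivAt_id x)
  have hh : HasFDerivAt (fun y : Octonion => y - (inner ℝ y y : ℝ) • a)
      (ContinuousLinearMap.id ℝ Octonion - (LiCLM x).smulRight a) x :=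
    (hasFDerivAt_id x).sub (hi.smul_const a)
  exact hg.smul hh

lemma LL_apply (a x v : Octonion) :
    LL a x v = ((qv a x)^4)⁻¹ • v - (((qv a x)^4)⁻¹ * (2 * (inner ℝ x v : ℝ))) • a
      + ((8 * (qv a x)^3 / ((qv a x)^4)^2) * (inner ℝ (wc a x) (conj v * a) : ℝ)) •
          (x - (inner ℝ x x : ℝ) • a) := by
  simp only [LL, LqCLM, LiCLM, ContinuousLinearMap.add_apply, ContinuousLinearMap.smul_apply,
    ContinuousLinearMap.smulRight_apply, ContinuousLinearMap.comp_apply,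
    ContinuousLinearMap.prod_apply, ContinuousLinearMap.id_apply, ContinuousLinearMap.sub_apply,
    ContinuousLinearMap.zero_apply, ContinuousLinearMap.neg_apply, Pi.neg_apply, fderivInnerCLM_apply, Tmap_apply, zero_sub,
    inner_neg_right, inner_neg_left, smul_eq_mul]
  rw [real_inner_comm v x, real_inner_comm (conj v * a) (wc a x)]
  match_scalars <;> ring

end Octonion
namespace Octonion

lemma norm_sq_conj (x : Octonion) : ‖conj x‖ ^ 2 = ‖x‖ ^ 2 := by
  rw [norm_sq_eq, norm_sq_eq]
  simp [Quaternion.normSq_star]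

lemma onorm_one : ‖(1 : Octonion)‖ = 1 := by
  have h : ‖(1 : Octonion)‖ ^ 2 = 1 := by
    rw [norm_sq_eq]; simp
  nlinarith [norm_nonneg (1 : Octonion)]

lemma sum_LL (a x : Octonion) :
    ∑ i, conj (e i) * (LL a x (e i)) =
      ((qv a x)^4)⁻¹ • ((8:ℝ) • (1:Octonion))
      - (((qv a x)^4)⁻¹ * 2) • (conj x * a)
      + (8 * (qv a x)^3 / ((qv a x)^4)^2) •
          ((wc a x * conj a) * (x - (inner ℝ x x : ℝ) • a)) := by
  have step : ∀ i : Fin 8, conj (e i) * (LL a x (e i)) =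
      ((qv a x)^4)⁻¹ • (conj (e i) * e i)
      - (((qv a x)^4)⁻¹ * 2) • ((((inner ℝ x (e i) : ℝ)) • conj (e i)) * a)
      + (8 * (qv a x)^3 / ((qv a x)^4)^2) •
          ((((inner ℝ (wc a x) (conj (e i) * a) : ℝ)) • conj (e i)) *
            (x - (inner ℝ x x : ℝ) • a)) := by
    intro i
    rw [LL_apply]
    rw [mul_add', mul_sub', mul_smul', mul_smul', mul_smul', smul_mul', smul_mul',
      smul_smul, smul_smul]
    match_scalars <;> ring
  rw [Finset.sum_congr rfl (fun i _ => step i), Finset.sum_add_distrib,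
    Finset.sum_sub_distrib, ← Finset.smul_sum, ← Finset.smul_sum, ← Finset.smul_sum,
    show (∑ i, (((inner ℝ x (e i) : ℝ)) • conj (e i)) * a)
        = (∑ i, ((inner ℝ x (e i) : ℝ)) • conj (e i)) * a from (map_sum (rmulL a) _ _).symm,
    show (∑ i, (((inner ℝ (wc a x) (conj (e i) * a) : ℝ)) • conj (e i)) *
          (x - (inner ℝ x x : ℝ) • a))
        = (∑ i, ((inner ℝ (wc a x) (conj (e i) * a) : ℝ)) • conj (e i)) *
          (x - (inner ℝ x x : ℝ) • a) from
      (map_sum (rmulL (x - (inner ℝ x x : ℝ) • a)) _ _).symm,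
    sum_A, sum_B, sum_C]

end Octonion

theorem bergman_kernel_eq_dbar' (x a : Octonion) (hx : ‖x‖ < 1) (ha : ‖a‖ < 1) :
    bergmanKernel x a =
      Octonion.Dbar (fun y =>
        (‖(1 : Octonion) - Octonion.conj y * a‖ ^ 8)⁻¹ • (y - (‖y‖ ^ 2) • a)) x := by
  open Octonion in
  have hwc : wc a x = (1 : Octonion) - conj x * a := rfl
  have hucube : ‖conj x * a‖ ^ 2 < 1 := by
    rw [norm_mul', norm_sq_conj]
    have h1 : ‖x‖ ^ 2 < 1 := by nlinarith [norm_nonneg x]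
    have h2 : ‖a‖ ^ 2 ≤ 1 := by nlinarith [norm_nonneg a]
    nlinarith [sq_nonneg ‖x‖, sq_nonneg ‖a‖]
  have hulT : ‖conj x * a‖ < 1 := by nlinarith [norm_nonneg (conj x * a)]
  have hwpos : 0 < ‖wc a x‖ := by
    have h1 := norm_sub_norm_le (1 : Octonion) (conj x * a)
    rw [onorm_one] at h1
    rw [hwc]
    linarith
  have hqe : qv a x = ‖wc a x‖ ^ 2 := real_inner_self_eq_norm_sq _
  have hne : qv a x ≠ 0 := by rw [hqe]; positivity
  have hfun : (fun y => (‖(1 : Octonion) - conj y * a‖ ^ 8)⁻¹ • (y - (‖y‖ ^ 2) • a))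
      = (fun y => ((inner ℝ ((1:Octonion) - Tmap a y) ((1:Octonion) - Tmap a y) : ℝ)^4)⁻¹ •
          (y - (inner ℝ y y : ℝ) • a)) := by
    funext y
    rw [real_inner_self_eq_norm_sq, real_inner_self_eq_norm_sq, Tmap_apply, ← pow_mul]
  have hd : fderiv ℝ
      (fun y => (‖(1 : Octonion) - conj y * a‖ ^ 8)⁻¹ • (y - (‖y‖ ^ 2) • a)) x = LL a x := by
    rw [hfun]; exact (hasFDerivAt_F a x hne).fderiv
  simp only [Dbar, pd, hd]
  rw [sum_LL, real_inner_self_eq_norm_sq]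
  have hM := main_algebra x a
  have hn : ‖(1 : Octonion) - conj x * a‖ ≠ 0 := by rw [← hwc]; exact ne_of_gt hwpos
  rw [bergmanKernel, hqe, hwc, ← hM]
  match_scalars <;> field_simp <;> ring


/-- `B(x,a) = D̄ₓ((x - a|x|²)/|1 - x̄a|⁸)` for `|x| < 1`, `|a| < 1`. -/
theorem bergman_kernel_eq_dbar (x a : Octonion) (hx : ‖x‖ < 1) (ha : ‖a‖ < 1) :
    bergmanKernel x a =
      Octonion.Dbar (fun y =>
        (‖(1 : Octonion) - Octonion.conj y * a‖ ^ 8)⁻¹ • (y - (‖y‖ ^ 2) • a)) x :=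
  bergman_kernel_eq_dbar' x a hx ha
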